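/- Let A be a finite commutative group and c : A × A → ℂˣ a 2-cocycle (with trivial action). Then the transpose c'(x,y) := c(y,x) is again a 2-cocycle, and the pointwise product c·c' is a 2-coboundary; equivalently, the cohomology class of c' is the inverse of the cohomology class of c. -/

import Mathlib

open CategoryTheory

/-- A 2-cocycle on a group `A` (written multiplicatively) with values in `ℂˣ`,
for the trivial action. -/
def IsTwoCocycle {A : Type*} [Group A] (f : A → A → ℂˣ) : Prop :=
  ∀ x y z : A, f x y * f (x * y) z = f x (y * z) * f y z

/-- A 2-coboundary: a 2-cocycle of the form `f x y = g x * g y * (g (x*y))⁻¹`. -/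
def IsTwoCoboundary {A : Type*} [Group A] (f : A → A → ℂˣ) : Prop :=
  ∃ g : A → ℂˣ, ∀ x y : A, f x y = g x * g y * (g (x * y))⁻¹

noncomputable instance : RootableBy ℂˣ ℕ where
  root a n :=
    if h : n = 0 then 1
    else
      ((isUnit_pow_iff h).mp
        ((Classical.choose_spec (IsAlgClosed.exists_pow_nat_eq (k := ℂ) (a : ℂ)
          (Nat.pos_of_ne_zero h))).symm ▸ a.isUnit)).unit
  root_zero a := dif_pos rfl
  root_cancel {n} a h := by
    rw [dif_neg h]
    ext
    rw [Units.val_pow_eq_pow_val, IsUnit.unit_spec]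
    exact Classical.choose_spec (IsAlgClosed.exists_pow_nat_eq (k := ℂ) (a : ℂ)
      (Nat.pos_of_ne_zero h))

noncomputable instance : RootableBy ℂˣ ℤ := Group.rootableByIntOfRootableByNat ℂˣ

noncomputable instance : DivisibleBy (Additive ℂˣ) ℤ where
  div a n := Additive.ofMul (RootableBy.root a.toMul n)
  div_zero a := congrArg Additive.ofMul (RootableBy.root_zero a.toMul)
  div_cancel {n} a hn := by
    apply Additive.toMul.injective
    rw [toMul_zsmul]
    exact RootableBy.root_cancel _ hn

universe v

noncomputable instance : DivisibleBy (ULift.{v} (Additive ℂˣ)) ℤ where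
  div a n := ULift.up (DivisibleBy.div a.down n)
  div_zero a := congrArg ULift.up (DivisibleBy.div_zero a.down)
  div_cancel {n} a hn := ULift.ext _ _ (DivisibleBy.div_cancel a.down hn)

/-- The underlying type of the central extension of `A` by `ℂˣ` twisted by a cocycle. -/
structure Tw (A : Type*) where
  u : ℂˣ
  x : A

section Tw

variable {A : Type*} [CommGroup A] (b : A → A → ℂˣ)

/-- The twisted multiplication. -/
def twMul : Tw A → Tw A → Tw A := fun p q => ⟨p.u * q.u * b p.x q.x, p.x * q.x⟩

/-- Group structure on the twisted product, for a normalized symmetric cocycle. -/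
def twCommGroup (hb : IsTwoCocycle b) (h1 : ∀ x, b 1 x = 1) (hx1 : ∀ x, b x 1 = 1)
    (hs : ∀ x y, b x y = b y x) : CommGroup (Tw A) where
  mul := twMul b
  one := ⟨1, 1⟩
  inv p := ⟨p.u⁻¹ * (b p.x p.x⁻¹)⁻¹, p.x⁻¹⟩
  mul_assoc p q r := by
    obtain ⟨u, x⟩ := p; obtain ⟨v, y⟩ := q; obtain ⟨w, z⟩ := r
    show twMul b (twMul b ⟨u, x⟩ ⟨v, y⟩) ⟨w, z⟩ = twMul b ⟨u, x⟩ (twMul b ⟨v, y⟩ ⟨w, z⟩)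
    simp only [twMul]
    have hh := congrArg Units.val (hb x y z)
    push_cast at hh
    congr 1
    · ext; push_cast; linear_combination (u : ℂ) * v * w * hh
    · exact mul_assoc x y z
  one_mul p := by
    obtain ⟨u, x⟩ := p
    show twMul b ⟨1, 1⟩ ⟨u, x⟩ = ⟨u, x⟩
    simp only [twMul]
    congr 1
    · rw [h1 x]; group
    · exact one_mul x
  mul_one p := by
    obtain ⟨u, x⟩ := p
    show twMul b ⟨u, x⟩ ⟨1, 1⟩ = ⟨u, x⟩
    simp only [twMul]
    congr 1
    · rw [hx1 x]; group
    · exact mul_one x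
  inv_mul_cancel p := by
    obtain ⟨u, x⟩ := p
    show twMul b ⟨u⁻¹ * (b x x⁻¹)⁻¹, x⁻¹⟩ ⟨u, x⟩ = ⟨1, 1⟩
    simp only [twMul]
    congr 1
    · rw [hs x⁻¹ x]
      simp [mul_comm, mul_left_comm, mul_assoc]
    · exact inv_mul_cancel x
  mul_comm p q := by
    obtain ⟨u, x⟩ := p; obtain ⟨v, y⟩ := q
    show twMul b ⟨u, x⟩ ⟨v, y⟩ = twMul b ⟨v, y⟩ ⟨u, x⟩
    simp only [twMul]
    congr 1
    · rw [hs x y, mul_comm u v]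
    · exact mul_comm x y

end Tw

/-- A normalized symmetric 2-cocycle with values in `ℂˣ` is a coboundary
(since `ℂˣ` is divisible, hence injective). -/
theorem symm_coboundary {A : Type*} [CommGroup A] (b : A → A → ℂˣ) (hb : IsTwoCocycle b)
    (h1 : ∀ x, b 1 x = 1) (hx1 : ∀ x, b x 1 = 1) (hs : ∀ x y, b x y = b y x) :
    IsTwoCoboundary b := by
  letI : CommGroup (Tw A) := twCommGroup b hb h1 hx1 hs
  have mul_def : ∀ p q : Tw A, p * q = ⟨p.u * q.u * b p.x q.x, p.x * q.x⟩ := fun _ _ => rfl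
  -- the inclusion ℂˣ → Tw A
  let ι : ℂˣ →* Tw A :=
    { toFun := fun u => ⟨u, 1⟩
      map_one' := rfl
      map_mul' := by
        intro u v
        rw [mul_def, hx1 1]
        simp }
  let ιa : ULift (Additive ℂˣ) →+ Additive (Tw A) :=
    (MonoidHom.toAdditive ι).comp AddEquiv.ulift.toAddMonoidHom
  let X := AddCommGrpCat.of (ULift (Additive ℂˣ))
  let Y := AddCommGrpCat.of (Additive (Tw A))
  let m : X ⟶ Y := AddCommGrpCat.ofHom ιa
  haveI : Mono m := by
    refine (AddCommGrpCat.mono_iff_injective _).mpr ?_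
    intro u v huv
    have h2 := congrArg Tw.u (congrArg Additive.toMul huv)
    apply ULift.ext
    exact h2
  haveI : Injective X := AddCommGrpCat.injective_of_divisible _
  let r : Y ⟶ X := Injective.factorThru (𝟙 X) m
  let rh : Additive (Tw A) →+ ULift (Additive ℂˣ) := r.hom
  have hcomp : m ≫ r = 𝟙 X := Injective.comp_factorThru (𝟙 X) m
  have hr : ∀ u : ℂˣ, rh (Additive.ofMul (ι u)) = ULift.up (Additive.ofMul u) := by
    intro u
    have h3 := ConcreteCategory.congr_hom hcomp (ULift.up (Additive.ofMul u))
    rw [CategoryTheory.comp_apply, CategoryTheory.id_apply] at h3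
    exact h3
  refine ⟨fun x => Additive.toMul ((rh (Additive.ofMul (Tw.mk 1 x))).down), fun x y => ?_⟩
  have key : (Tw.mk 1 x : Tw A) * Tw.mk 1 y = ι (b x y) * Tw.mk 1 (x * y) := by
    show twMul b (Tw.mk 1 x) (Tw.mk 1 y) = twMul b (Tw.mk (b x y) 1) (Tw.mk 1 (x * y))
    simp only [twMul]
    congr 1
    · rw [h1 (x * y)]; group
    · rw [one_mul]
  have hadd : rh (Additive.ofMul ((Tw.mk 1 x : Tw A) * Tw.mk 1 y))
      = rh (Additive.ofMul ((Tw.mk 1 x : Tw A))) + rh (Additive.ofMul (Tw.mk 1 y)) :=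
    map_add rh _ _
  have hadd2 : rh (Additive.ofMul ((ι (b x y)) * Tw.mk 1 (x * y)))
      = rh (Additive.ofMul (ι (b x y))) + rh (Additive.ofMul (Tw.mk 1 (x * y))) :=
    map_add rh _ _
  rw [key] at hadd
  rw [hadd2, hr (b x y)] at hadd
  have h4 := congrArg (fun z => Additive.toMul (ULift.down z)) hadd
  simp only [ULift.add_down, toMul_add] at h4
  show b x y = Additive.toMul ((rh (Additive.ofMul (Tw.mk 1 x))).down) *
      Additive.toMul ((rh (Additive.ofMul (Tw.mk 1 y))).down) *
      (Additive.toMul ((rh (Additive.ofMul (Tw.mk 1 (x * y)))).down))⁻¹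
  rw [eq_comm, mul_inv_eq_iff_eq_mul]
  exact h4.symm

theorem stmt_4 (A : Type*) [CommGroup A] [Finite A] (c : A → A → ℂˣ)
    (hc : IsTwoCocycle c) :
    IsTwoCocycle (fun x y => c y x) ∧
    IsTwoCoboundary (fun x y => c x y * c y x) := by
  have h1 : ∀ x : A, c 1 x = c 1 1 := by
    intro x
    have h := hc 1 1 x
    rw [one_mul, one_mul] at h
    exact (mul_right_cancel h).symm
  have hx1 : ∀ x : A, c x 1 = c 1 1 := by
    intro x
    have h := hc x 1 1
    rw [mul_one, mul_one] at h
    exact mul_left_cancel h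
  constructor
  · intro x y z
    show c y x * c z (x * y) = c (y * z) x * c z y
    have h := hc z y x
    rw [mul_comm z y, mul_comm y x] at h
    ext
    have hh := congrArg Units.val h
    push_cast at hh ⊢
    linear_combination -hh
  · -- normalize: b x y = c x y * c y x * k⁻¹ with k = (c 1 1)^2
    set k : ℂˣ := c 1 1 * c 1 1 with hk
    set b : A → A → ℂˣ := fun x y => c x y * c y x * k⁻¹ with hbdef
    have hct : IsTwoCocycle (fun x y => c y x) := by
      intro x y z
      show c y x * c z (x * y) = c (y * z) x * c z y
      have h := hc z y x
      rw [mul_comm z y, mul_comm y x] at h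
      ext
      have hh := congrArg Units.val h
      push_cast at hh ⊢
      linear_combination -hh
    have hb : IsTwoCocycle b := by
      intro x y z
      show (c x y * c y x) * k⁻¹ * ((c (x * y) z * c z (x * y)) * k⁻¹)
          = (c x (y * z) * c (y * z) x) * k⁻¹ * ((c y z * c z y) * k⁻¹)
      have hA := congrArg Units.val (hc x y z)
      have hB := congrArg Units.val (hct x y z)
      push_cast at hA hB
      ext
      push_cast
      linear_combination ((c y x : ℂ) * c z (x * y) * (k : ℂ)⁻¹ * (k : ℂ)⁻¹) * hA +
        ((c x (y * z) : ℂ) * c y z * (k : ℂ)⁻¹ * (k : ℂ)⁻¹) * hB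
    have hb1 : ∀ x, b 1 x = 1 := by
      intro x
      simp only [hbdef]
      rw [h1 x, hx1 x, hk]
      group
    have hbx1 : ∀ x, b x 1 = 1 := by
      intro x
      simp only [hbdef]
      rw [h1 x, hx1 x, hk]
      group
    have hbs : ∀ x y, b x y = b y x := by
      intro x y
      simp only [hbdef]
      rw [mul_comm (c x y) (c y x)]
    obtain ⟨g, hg⟩ := symm_coboundary b hb hb1 hbx1 hbs
    refine ⟨fun x => g x * k, fun x y => ?_⟩
    have := hg x y
    simp only [hbdef] at this
    have h5 : ((g (x * y)) : ℂ) ≠ 0 := Units.ne_zero _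
    have h6 : ((k : ℂˣ) : ℂ) ≠ 0 := Units.ne_zero _
    calc c x y * c y x = (c x y * c y x * k⁻¹) * k := by
          ext; push_cast; field_simp
      _ = (g x * g y * (g (x*y))⁻¹) * k := by rw [this]
      _ = g x * k * (g y * k) * (g (x * y) * k)⁻¹ := by
          ext; push_cast; field_simp
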